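/- (Robust stability) Let F be strictly causal and incrementally finite-gain ℓ_p-stable, and let Ψ = (Ψˣ, Ψᵘ) be causal with Ψˣ - I strictly causal and Ψ incrementally finite-gain ℓ_p-stable. If the residual operator Δ[F,Ψ] := F(Ψ) + I - Ψˣ is (γ,β)-incrementally finite-gain ℓ_p-stable with γ < 1, then the perturbed closed-loop map Φ_{S'}[F,Ψ] : (w,d,v) ↦ (x,u,ŵ) defined by x = F(x,u) + w, ŵ = x + v - (Ψˣ - I)(ŵ), u = Ψᵘ(ŵ) + d is finite-gain ℓ_p-stable at any nominal perturbation δ* ∈ ℓ_p. -/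

import Mathlib

open scoped ENNReal NNReal

/-- The ℓ_p norm of a sequence, valued in `ℝ≥0∞` (sup norm for `p = ∞`). -/
noncomputable def pNorm (p : ℝ≥0∞) {E : Type*} [NormedAddCommGroup E] (x : ℕ → E) : ℝ≥0∞ :=
  if p = ∞ then ⨆ k, (‖x k‖₊ : ℝ≥0∞)
  else (∑' k, (‖x k‖₊ : ℝ≥0∞) ^ p.toReal) ^ (1 / p.toReal)

/-- A causal operator on sequence space: the t-th output depends only on inputs 0..t. -/
def Causal {E F : Type*} (Q : (ℕ → E) → (ℕ → F)) : Prop :=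
  ∀ x y : ℕ → E, ∀ t, (∀ s, s ≤ t → x s = y s) → Q x t = Q y t

/-- A strictly causal operator: the t-th output depends only on inputs 0..t-1. -/
def StrictlyCausal {E F : Type*} (Q : (ℕ → E) → (ℕ → F)) : Prop :=
  ∀ x y : ℕ → E, ∀ t, (∀ s, s < t → x s = y s) → Q x t = Q y t

/-- A strictly causal operator of two sequence arguments. -/
def StrictlyCausal2 {E U F : Type*} (Φ : (ℕ → E) → (ℕ → U) → (ℕ → F)) : Prop :=
  ∀ x y u v, ∀ t, (∀ s, s < t → x s = y s) → (∀ s, s < t → u s = v s) →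
    Φ x u t = Φ y v t

open MeasureTheory


section helpers
variable {E F' : Type*} [NormedAddCommGroup E] [NormedAddCommGroup F'] {p : ℝ≥0∞}

lemma pNorm_congr {x y : ℕ → E} (h : ∀ t, x t = y t) : pNorm p x = pNorm p y := by
  rw [show x = y from funext h]

lemma pNorm_mono {x : ℕ → E} {y : ℕ → F'} (h : ∀ k, ‖x k‖₊ ≤ ‖y k‖₊) :
    pNorm p x ≤ pNorm p y := by
  unfold pNorm
  split_ifs
  · exact iSup_mono fun k => ENNReal.coe_le_coe.2 (h k)
  · refine ENNReal.rpow_le_rpow (ENNReal.tsum_le_tsum fun k => ?_)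
      (by positivity)
    exact ENNReal.rpow_le_rpow (ENNReal.coe_le_coe.2 (h k)) ENNReal.toReal_nonneg

lemma pNorm_neg (x : ℕ → E) : pNorm p (fun t => -x t) = pNorm p x := by
  unfold pNorm; simp

lemma pNorm_zero (hp : 1 ≤ p) : pNorm p (fun _ => (0 : E)) = 0 := by
  unfold pNorm
  split_ifs with h
  · simp
  · have hr : 0 < p.toReal := by
      have := ENNReal.toReal_mono h hp
      simpa using lt_of_lt_of_le one_pos (by simpa using this)
    have hr' : (0:ℝ) < 1/p.toReal := by positivity
    simp only [nnnorm_zero, ENNReal.coe_zero, ENNReal.zero_rpow_of_pos hr, tsum_zero,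
      ENNReal.zero_rpow_of_pos hr']

lemma pNorm_add_le (hp : 1 ≤ p) (x y : ℕ → E) :
    pNorm p (fun t => x t + y t) ≤ pNorm p x + pNorm p y := by
  unfold pNorm
  split_ifs with h
  · refine iSup_le fun k => ?_
    calc (‖x k + y k‖₊ : ℝ≥0∞) ≤ (‖x k‖₊ : ℝ≥0∞) + ‖y k‖₊ := by
          exact_mod_cast nnnorm_add_le _ _
      _ ≤ _ := add_le_add (le_iSup (fun k => (‖x k‖₊ : ℝ≥0∞)) k)
          (le_iSup (fun k => (‖y k‖₊ : ℝ≥0∞)) k)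
  · have hr : 1 ≤ p.toReal := by simpa using ENNReal.toReal_mono h hp
    have key := ENNReal.lintegral_Lp_add_le (μ := (Measure.count : Measure ℕ))
      (f := fun k => (‖x k‖₊ : ℝ≥0∞)) (g := fun k => (‖y k‖₊ : ℝ≥0∞))
      (measurable_of_countable _).aemeasurable (measurable_of_countable _).aemeasurable hr
    rw [lintegral_count, lintegral_count, lintegral_count] at key
    refine le_trans ?_ key
    refine ENNReal.rpow_le_rpow (ENNReal.tsum_le_tsum fun k => ?_) (by positivity)
    refine ENNReal.rpow_le_rpow ?_ ENNReal.toReal_nonneg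
    show (‖x k + y k‖₊ : ℝ≥0∞) ≤ (‖x k‖₊ : ℝ≥0∞) + (‖y k‖₊ : ℝ≥0∞)
    exact_mod_cast nnnorm_add_le _ _
def tr (T : ℕ) (x : ℕ → E) : ℕ → E := fun t => if t < T then x t else 0

lemma pNorm_tr_lt_top (hp : 1 ≤ p) (T : ℕ) (x : ℕ → E) : pNorm p (tr T x) < ∞ := by
  unfold pNorm tr
  split_ifs with h
  · refine lt_of_le_of_lt (iSup_le fun k => ?_)
      (ENNReal.sum_lt_top.2 (fun i _ => ENNReal.coe_lt_top) :
        (∑ i ∈ Finset.range T, (‖x i‖₊ : ℝ≥0∞)) < ∞)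
    by_cases hk : k < T
    · simpa [hk] using Finset.single_le_sum (f := fun i => (‖x i‖₊ : ℝ≥0∞))
        (fun i _ => zero_le) (Finset.mem_range.2 hk)
    · simp [hk]
  · have hr : 0 < p.toReal := lt_of_lt_of_le one_pos (by simpa using ENNReal.toReal_mono h hp)
    have : (∑' k, (‖(if k < T then x k else 0 : E)‖₊ : ℝ≥0∞) ^ p.toReal)
        = ∑ k ∈ Finset.range T, (‖(if k < T then x k else 0 : E)‖₊ : ℝ≥0∞) ^ p.toReal := by
      refine tsum_eq_sum fun k hk => ?_
      have : ¬ k < T := fun h' => hk (Finset.mem_range.2 h')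
      simp [this, ENNReal.zero_rpow_of_pos hr]
    rw [this]
    refine ENNReal.rpow_lt_top_of_nonneg (by positivity) ?_
    exact (ENNReal.sum_lt_top.2 fun i _ =>
      (ENNReal.rpow_lt_top_of_nonneg ENNReal.toReal_nonneg ENNReal.coe_ne_top)).ne

lemma pNorm_le_of_forall_tr (hp : 1 ≤ p) {x : ℕ → E} {M : ℝ≥0∞}
    (h : ∀ T, pNorm p (tr T x) ≤ M) : pNorm p x ≤ M := by
  unfold pNorm at *
  split_ifs at * with hpt
  · refine iSup_le fun k => ?_
    refine le_trans ?_ (h (k + 1))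
    refine le_trans ?_ (le_iSup (fun j => (‖tr (k+1) x j‖₊ : ℝ≥0∞)) k)
    simp [tr]
  · have hr : 0 < p.toReal :=
      lt_of_lt_of_le one_pos (by simpa using ENNReal.toReal_mono hpt hp)
    rw [one_div, ENNReal.rpow_inv_le_iff hr]
    rw [ENNReal.tsum_eq_iSup_sum]
    refine iSup_le fun s => ?_
    set T := (s.sup id) + 1 with hT
    have hsub : s ⊆ Finset.range T := by
      intro k hk
      exact Finset.mem_range.2 (Nat.lt_succ_of_le (Finset.le_sup (f := id) hk))
    calc ∑ k ∈ s, (‖x k‖₊ : ℝ≥0∞) ^ p.toReal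
        ≤ ∑ k ∈ Finset.range T, (‖x k‖₊ : ℝ≥0∞) ^ p.toReal :=
          Finset.sum_le_sum_of_subset hsub
      _ = ∑' k, (‖tr T x k‖₊ : ℝ≥0∞) ^ p.toReal := by
          have e1 : ∑' k, (‖tr T x k‖₊ : ℝ≥0∞) ^ p.toReal
              = ∑ k ∈ Finset.range T, (‖tr T x k‖₊ : ℝ≥0∞) ^ p.toReal := by
            refine tsum_eq_sum fun k hk => ?_
            have hk' : ¬ k < T := fun h' => hk (Finset.mem_range.2 h')
            have : tr T x k = 0 := if_neg hk'
            rw [this]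
            simp [ENNReal.zero_rpow_of_pos hr]
          rw [e1]
          exact Finset.sum_congr rfl fun k hk => by simp [tr, Finset.mem_range.1 hk]
      _ ≤ M ^ p.toReal := by
          have h2 := h T
          have := ENNReal.rpow_le_rpow h2 (le_of_lt hr)
          rwa [← ENNReal.rpow_mul, one_div, inv_mul_cancel₀ (ne_of_gt hr),
            ENNReal.rpow_one] at this

section helpers2
variable {E : Type*} [NormedAddCommGroup E] {p : ℝ≥0∞}

lemma one_sub_ne_zero {γ : ℝ≥0∞} (hγ : γ < 1) : (1 : ℝ≥0∞) - γ ≠ 0 :=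
  fun h0 => absurd (tsub_eq_zero_iff_le.1 h0) (not_le.2 hγ)

lemma one_sub_ne_top {γ : ℝ≥0∞} : (1 : ℝ≥0∞) - γ ≠ ∞ :=
  (lt_of_le_of_lt tsub_le_self ENNReal.one_lt_top).ne

lemma contract_le {A R γ : ℝ≥0∞} (hγ : γ < 1) (hA : A ≠ ∞)
    (h : A ≤ γ * A + R) : A ≤ R / (1 - γ) := by
  rw [ENNReal.le_div_iff_mul_le (Or.inl (one_sub_ne_zero hγ)) (Or.inl one_sub_ne_top)]
  calc A * (1 - γ) = (1 - γ) * A := mul_comm _ _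
    _ = 1 * A - γ * A := ENNReal.sub_mul (fun _ _ => hA)
    _ ≤ R := by rw [one_mul]; exact tsub_le_iff_right.2 (by rwa [add_comm] at h)

lemma fixedpoint_pNorm_le (hp : 1 ≤ p) (G : (ℕ → E) → (ℕ → E))
    (hG : StrictlyCausal G) {γ c : ℝ≥0∞} (hγ : γ < 1) (hc : c ≠ ∞)
    (hb : ∀ b, pNorm p b < ∞ → pNorm p (G b) ≤ γ * pNorm p b + c)
    (a : ℕ → E) (ha : ∀ t, a t = G a t) : pNorm p a ≤ c / (1 - γ) := by
  set M := c / (1 - γ) with hM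
  have hcM : (1 - γ) * M = c := ENNReal.mul_div_cancel (one_sub_ne_zero hγ) one_sub_ne_top
  have hstep : γ * M + c ≤ M := by
    have h1 : γ + (1 - γ) = 1 := by rw [add_comm]; exact tsub_add_cancel_of_le hγ.le
    calc γ * M + c = γ * M + (1 - γ) * M := by rw [hcM]
      _ = (γ + (1 - γ)) * M := (add_mul _ _ _).symm
      _ ≤ M := le_of_eq (by rw [h1, one_mul])
  have key : ∀ T, pNorm p (tr T a) ≤ M := by
    intro T
    induction T with
    | zero =>
        have h0 : pNorm p (tr 0 a) = pNorm p (fun _ => (0 : E)) :=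
          pNorm_congr fun t => if_neg (Nat.not_lt_zero t)
        rw [h0, pNorm_zero hp]; exact zero_le
    | succ T ih =>
        have hfin := pNorm_tr_lt_top hp T a
        have h1 : pNorm p (tr (T+1) a) ≤ pNorm p (G (tr T a)) := by
          refine pNorm_mono fun t => ?_
          by_cases ht : t < T + 1
          · have heq : tr (T+1) a t = G (tr T a) t := by
              rw [show tr (T+1) a t = a t from if_pos ht, ha t]
              exact hG a (tr T a) t fun s hs =>
                (if_pos (lt_of_lt_of_le hs (Nat.lt_succ_iff.1 ht))).symm
            rw [heq]
          · have : tr (T+1) a t = 0 := if_neg ht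
            simp [this]
        exact h1.trans ((hb _ hfin).trans
          (le_trans (add_le_add_left (mul_le_mul_right ih γ) c) hstep))
  exact pNorm_le_of_forall_tr hp key

end helpers2

end helpers
section mainhelp
variable {E : Type*} [NormedAddCommGroup E] {p : ℝ≥0∞}

lemma pNorm_sub_le (hp : 1 ≤ p) (x y : ℕ → E) :
    pNorm p (fun t => x t - y t) ≤ pNorm p x + pNorm p y := by
  calc pNorm p (fun t => x t - y t)
      = pNorm p (fun t => x t + -(y t)) := pNorm_congr fun t => sub_eq_add_neg _ _
    _ ≤ pNorm p x + pNorm p (fun t => -(y t)) := pNorm_add_le hp _ _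
    _ = pNorm p x + pNorm p y := by rw [pNorm_neg]

end mainhelp

/-- robust stability: if `F` and `Ψ = (Ψˣ,Ψᵘ)` are incrementally
finite-gain `ℓ_p`-stable and the residual `Δ[F,Ψ] = F(Ψ) + I - Ψˣ` is `(γ,β)`-i.f.g. with
`γ < 1`, then the perturbed closed-loop map `(w,d,v) ↦ (x,u,ŵ)` of the system-level
controller is finite-gain `ℓ_p`-stable at every nominal perturbation `δ* ∈ ℓ_p`
(using the sum of component norms on product spaces). -/
theorem robust_stability {E U : Type*} [NormedAddCommGroup E] [NormedAddCommGroup U]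
    (p : ℝ≥0∞) (hp : 1 ≤ p)
    (F : (ℕ → E) → (ℕ → U) → (ℕ → E))
    (Ψx : (ℕ → E) → (ℕ → E)) (Ψu : (ℕ → E) → (ℕ → U))
    (hF : StrictlyCausal2 F) (hΨx : Causal Ψx) (hΨu : Causal Ψu)
    (hΨxI : StrictlyCausal (fun a => Ψx a - a))
    -- F is incrementally finite-gain ℓ_p-stable:
    (γF βF : ℝ≥0)
    (hFmap : ∀ x u, pNorm p x < ∞ → pNorm p u < ∞ → pNorm p (F x u) < ∞)
    (hFifg : ∀ x u x' u', pNorm p x < ∞ → pNorm p u < ∞ →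
        pNorm p x' < ∞ → pNorm p u' < ∞ →
      pNorm p (F x u - F x' u')
        ≤ γF * (pNorm p (x - x') + pNorm p (u - u')) + βF)
    -- Ψ is incrementally finite-gain ℓ_p-stable:
    (γΨ βΨ : ℝ≥0)
    (hΨmap : ∀ a, pNorm p a < ∞ → pNorm p (Ψx a) < ∞ ∧ pNorm p (Ψu a) < ∞)
    (hΨifg : ∀ a a', pNorm p a < ∞ → pNorm p a' < ∞ →
      pNorm p (Ψx a - Ψx a') + pNorm p (Ψu a - Ψu a')
        ≤ γΨ * pNorm p (a - a') + βΨ)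
    -- the residual Δ[F,Ψ] = F(Ψ) + I - Ψˣ is (γ,β)-i.f.g. with γ < 1:
    (γ β : ℝ≥0) (hγ : γ < 1)
    (hΔifg : ∀ a a', pNorm p a < ∞ → pNorm p a' < ∞ →
      pNorm p ((fun t => F (Ψx a) (Ψu a) t + a t - Ψx a t)
          - (fun t => F (Ψx a') (Ψu a') t + a' t - Ψx a' t))
        ≤ γ * pNorm p (a - a') + β) :
    -- conclusion: f.g. ℓ_p-stability at any nominal perturbation δ* = (ws,ds,vs):
    ∀ (ws : ℕ → E) (ds : ℕ → U) (vs : ℕ → E),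
      pNorm p ws < ∞ → pNorm p ds < ∞ → pNorm p vs < ∞ →
      ∃ γ' β' : ℝ≥0,
        ∀ (w : ℕ → E) (d : ℕ → U) (v : ℕ → E)
          (xs : ℕ → E) (us : ℕ → U) (hws : ℕ → E)
          (x : ℕ → E) (u : ℕ → U) (hw : ℕ → E),
          pNorm p w < ∞ → pNorm p d < ∞ → pNorm p v < ∞ →
          ((∀ t, xs t = F xs us t + ws t) ∧
            (∀ t, hws t = xs t + vs t - (Ψx hws t - hws t)) ∧
            (∀ t, us t = Ψu hws t + ds t)) →
          ((∀ t, x t = F x u t + w t) ∧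
            (∀ t, hw t = x t + v t - (Ψx hw t - hw t)) ∧
            (∀ t, u t = Ψu hw t + d t)) →
          pNorm p (x - xs) + pNorm p (u - us) + pNorm p (hw - hws)
            ≤ γ' * (pNorm p (w - ws) + pNorm p (d - ds) + pNorm p (v - vs)) + β' := by
  intro ws ds vs hwsn hdsn hvsn
  have hγ1 : (γ : ℝ≥0∞) < 1 := by exact_mod_cast hγ
  have hzfin : pNorm p (0 : ℕ → E) < ∞ := by
    rw [show pNorm p (0 : ℕ → E) = pNorm p (fun _ => (0:E)) from rfl, pNorm_zero hp]
    simp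
  obtain ⟨hz1, hz2⟩ := hΨmap 0 hzfin
  have hD0fin : pNorm p (fun t => F (Ψx 0) (Ψu 0) t + (0:ℕ→E) t - Ψx 0 t) < ∞ := by
    calc pNorm p (fun t => F (Ψx 0) (Ψu 0) t + (0:ℕ→E) t - Ψx 0 t)
        = pNorm p (fun t => F (Ψx 0) (Ψu 0) t - Ψx 0 t) := pNorm_congr fun t => by simp
      _ ≤ pNorm p (F (Ψx 0) (Ψu 0)) + pNorm p (Ψx 0) := pNorm_sub_le hp _ _
      _ < ∞ := ENNReal.add_lt_top.2 ⟨hFmap _ _ hz1 hz2, hz1⟩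
  -- algebraic consequence of the second closed-loop equation
  have hxOf : ∀ (v x hw : ℕ → E), (∀ t, hw t = x t + v t - (Ψx hw t - hw t)) →
      ∀ t, x t = Ψx hw t - v t := by
    intro v x hw h2 t
    have h2' : hw t = (x t + v t - Ψx hw t) + hw t :=
      (h2 t).trans (by abel)
    have h4 : x t + v t - Ψx hw t = 0 := right_eq_add.mp h2'
    exact eq_sub_iff_add_eq.mpr (sub_eq_zero.mp h4)
  -- every closed-loop trajectory is a fixed point of a strictly causal operator
  have Geq : ∀ (w : ℕ → E) (d : ℕ → U) (v : ℕ → E) (x : ℕ → E) (u : ℕ → U) (hw : ℕ → E),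
      (∀ t, x t = F x u t + w t) → (∀ t, hw t = x t + v t - (Ψx hw t - hw t)) →
      (∀ t, u t = Ψu hw t + d t) →
      ∀ t, hw t = hw t - Ψx hw t
        + F (fun s => Ψx hw s - v s) (fun s => Ψu hw s + d s) t + w t + v t := by
    intro w d v x u hw h1 h2 h3 t
    have hx := hxOf v x hw h2
    have hxf : (fun s => Ψx hw s - v s) = x := (funext hx).symm
    have huf : (fun s => Ψu hw s + d s) = u := funext fun s => (h3 s).symm
    rw [hxf, huf]
    have hF1 : F x u t = x t - w t := eq_sub_iff_add_eq.mpr (h1 t).symm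
    have h5 : x t + v t = Ψx hw t := by
      have := hx t
      rw [this]; abel
    rw [hF1, ← h5]; abel
  -- finiteness of the internal signal hw along any closed-loop trajectory
  have key : ∀ (w : ℕ → E) (d : ℕ → U) (v : ℕ → E), pNorm p w < ∞ → pNorm p d < ∞ →
      pNorm p v < ∞ → ∀ (x : ℕ → E) (u : ℕ → U) (hw : ℕ → E),
      (∀ t, x t = F x u t + w t) → (∀ t, hw t = x t + v t - (Ψx hw t - hw t)) →
      (∀ t, u t = Ψu hw t + d t) → pNorm p hw < ∞ := by
    intro w d v hwn hdn hvn x u hw h1 h2 h3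
    set c : ℝ≥0∞ := (β:ℝ≥0∞) + pNorm p (fun t => F (Ψx 0) (Ψu 0) t + (0:ℕ→E) t - Ψx 0 t)
      + ((γF:ℝ≥0∞) * (pNorm p v + pNorm p d) + βF) + (pNorm p w + pNorm p v) with hc
    have hcne : c ≠ ∞ := by
      rw [hc]
      refine ENNReal.add_ne_top.2 ⟨ENNReal.add_ne_top.2 ⟨ENNReal.add_ne_top.2
        ⟨ENNReal.coe_ne_top, hD0fin.ne⟩, ENNReal.add_ne_top.2
        ⟨ENNReal.mul_ne_top ENNReal.coe_ne_top
          (ENNReal.add_ne_top.2 ⟨hvn.ne, hdn.ne⟩), ENNReal.coe_ne_top⟩⟩,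
        ENNReal.add_ne_top.2 ⟨hwn.ne, hvn.ne⟩⟩
    set G : (ℕ → E) → (ℕ → E) := fun b t => b t - Ψx b t
      + F (fun s => Ψx b s - v s) (fun s => Ψu b s + d s) t + w t + v t with hG
    have hGsc : StrictlyCausal G := by
      intro b b' t hbt
      have hxx : ∀ s, s < t → Ψx b s = Ψx b' s := fun s hs =>
        hΨx b b' s fun s' hs' => hbt s' (lt_of_le_of_lt hs' hs)
      have huu : ∀ s, s < t → Ψu b s = Ψu b' s := fun s hs =>
        hΨu b b' s fun s' hs' => hbt s' (lt_of_le_of_lt hs' hs)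
      have hFF : F (fun s => Ψx b s - v s) (fun s => Ψu b s + d s) t
          = F (fun s => Ψx b' s - v s) (fun s => Ψu b' s + d s) t :=
        hF _ _ _ _ t (fun s hs => by rw [hxx s hs]) (fun s hs => by rw [huu s hs])
      have hI0 := hΨxI b b' t hbt
      simp only [Pi.sub_apply] at hI0
      have hI : b t - Ψx b t = b' t - Ψx b' t := by
        rw [← neg_sub (Ψx b t) (b t), ← neg_sub (Ψx b' t) (b' t), hI0]
      simp only [hG]
      rw [hI, hFF]
    have hGb : ∀ b, pNorm p b < ∞ → pNorm p (G b) ≤ (γ:ℝ≥0∞) * pNorm p b + c := by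
      intro b hb
      obtain ⟨hbx, hbu⟩ := hΨmap b hb
      have hxvfin : pNorm p (fun s => Ψx b s - v s) < ∞ :=
        lt_of_le_of_lt (pNorm_sub_le hp _ _) (ENNReal.add_lt_top.2 ⟨hbx, hvn⟩)
      have hudfin : pNorm p (fun s => Ψu b s + d s) < ∞ :=
        lt_of_le_of_lt (pNorm_add_le hp _ _) (ENNReal.add_lt_top.2 ⟨hbu, hdn⟩)
      have hΔb : pNorm p (fun t => F (Ψx b) (Ψu b) t + b t - Ψx b t)
          ≤ (γ:ℝ≥0∞) * pNorm p b
            + ((β:ℝ≥0∞) + pNorm p (fun t => F (Ψx 0) (Ψu 0) t + (0:ℕ→E) t - Ψx 0 t)) := by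
        have h := hΔifg b 0 hb hzfin
        rw [sub_zero] at h
        calc pNorm p (fun t => F (Ψx b) (Ψu b) t + b t - Ψx b t)
            = pNorm p (fun t => ((fun t => F (Ψx b) (Ψu b) t + b t - Ψx b t)
                - (fun t => F (Ψx 0) (Ψu 0) t + (0:ℕ→E) t - Ψx 0 t)) t
                + (fun t => F (Ψx 0) (Ψu 0) t + (0:ℕ→E) t - Ψx 0 t) t) :=
              pNorm_congr fun t => by simp only [Pi.sub_apply]; abel
          _ ≤ pNorm p ((fun t => F (Ψx b) (Ψu b) t + b t - Ψx b t)
                - (fun t => F (Ψx 0) (Ψu 0) t + (0:ℕ→E) t - Ψx 0 t))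
              + pNorm p (fun t => F (Ψx 0) (Ψu 0) t + (0:ℕ→E) t - Ψx 0 t) :=
              pNorm_add_le hp _ _
          _ ≤ ((γ:ℝ≥0∞) * pNorm p b + β)
              + pNorm p (fun t => F (Ψx 0) (Ψu 0) t + (0:ℕ→E) t - Ψx 0 t) :=
              add_le_add_left h _
          _ = _ := by ring
      have hFd : pNorm p (fun t => F (fun s => Ψx b s - v s) (fun s => Ψu b s + d s) t
            - F (Ψx b) (Ψu b) t)
          ≤ (γF:ℝ≥0∞) * (pNorm p v + pNorm p d) + βF := by
        have h := hFifg (fun s => Ψx b s - v s) (fun s => Ψu b s + d s) (Ψx b) (Ψu b)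
          hxvfin hudfin hbx hbu
        have e1 : pNorm p ((fun s => Ψx b s - v s) - Ψx b) = pNorm p v := by
          refine (pNorm_congr (y := fun s => -(v s)) fun s => ?_).trans (pNorm_neg v)
          show Ψx b s - v s - Ψx b s = -(v s)
          abel
        have e2 : pNorm p ((fun s => Ψu b s + d s) - Ψu b) = pNorm p d := by
          refine pNorm_congr fun s => ?_
          show Ψu b s + d s - Ψu b s = d s
          abel
        rw [e1, e2] at h
        exact (le_of_eq (pNorm_congr fun t => rfl)).trans h
      calc pNorm p (G b)
          = pNorm p (fun t => (fun t => F (Ψx b) (Ψu b) t + b t - Ψx b t) t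
              + ((fun t => F (fun s => Ψx b s - v s) (fun s => Ψu b s + d s) t
                  - F (Ψx b) (Ψu b) t) t
              + (w t + v t))) := pNorm_congr fun t => by simp only [hG]; abel
        _ ≤ pNorm p (fun t => F (Ψx b) (Ψu b) t + b t - Ψx b t)
            + (pNorm p (fun t => F (fun s => Ψx b s - v s) (fun s => Ψu b s + d s) t
                - F (Ψx b) (Ψu b) t)
              + (pNorm p w + pNorm p v)) := by
            refine (pNorm_add_le hp _ _).trans (add_le_add_right ?_ _)
            exact (pNorm_add_le hp _ _).trans (add_le_add_right (pNorm_add_le hp w v) _)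
        _ ≤ ((γ:ℝ≥0∞) * pNorm p b
              + ((β:ℝ≥0∞) + pNorm p (fun t => F (Ψx 0) (Ψu 0) t + (0:ℕ→E) t - Ψx 0 t)))
            + (((γF:ℝ≥0∞) * (pNorm p v + pNorm p d) + βF) + (pNorm p w + pNorm p v)) :=
            add_le_add hΔb (add_le_add_left hFd _)
        _ = (γ:ℝ≥0∞) * pNorm p b + c := by rw [hc]; ring
    have hfix := fixedpoint_pNorm_le hp G hGsc hγ1 hcne hGb hw
      (fun t => by simp only [hG]; exact Geq w d v x u hw h1 h2 h3 t)
    exact lt_of_le_of_lt hfix (ENNReal.div_lt_top hcne (one_sub_ne_zero hγ1))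
  -- constants
  have hKne : ((1:ℝ≥0∞) - γ)⁻¹ ≠ ∞ := ENNReal.inv_ne_top.2 (one_sub_ne_zero hγ1)
  set K : ℝ≥0∞ := ((1:ℝ≥0∞) - γ)⁻¹ with hK
  set C0 : ℝ≥0∞ := (β:ℝ≥0∞) + 2*(βF:ℝ≥0∞)
      + 2*(γF:ℝ≥0∞)*(pNorm p vs + pNorm p ds) with hC0
  have hC0ne : C0 ≠ ∞ := by
    rw [hC0]
    refine ENNReal.add_ne_top.2 ⟨ENNReal.add_ne_top.2 ⟨ENNReal.coe_ne_top,
      ENNReal.mul_ne_top (by simp) ENNReal.coe_ne_top⟩, ?_⟩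
    exact ENNReal.mul_ne_top (ENNReal.mul_ne_top (by simp) ENNReal.coe_ne_top)
      (ENNReal.add_ne_top.2 ⟨hvsn.ne, hdsn.ne⟩)
  set Γ : ℝ≥0∞ := ((γΨ:ℝ≥0∞)+1)*(((γF:ℝ≥0∞)+1)*K) + 1 with hΓdef
  set B : ℝ≥0∞ := ((γΨ:ℝ≥0∞)+1)*(C0*K) + βΨ with hBdef
  have hΓne : Γ ≠ ∞ := by
    rw [hΓdef]
    exact ENNReal.add_ne_top.2 ⟨ENNReal.mul_ne_top (by simp)
      (ENNReal.mul_ne_top (by simp) hKne), by simp⟩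
  have hBne : B ≠ ∞ := by
    rw [hBdef]
    exact ENNReal.add_ne_top.2 ⟨ENNReal.mul_ne_top (by simp)
      (ENNReal.mul_ne_top hC0ne hKne), ENNReal.coe_ne_top⟩
  refine ⟨Γ.toNNReal, B.toNNReal, ?_⟩
  intro w d v xs us hws x u hw hwn hdn hvn hS hP
  obtain ⟨hs1, hs2, hs3⟩ := hS
  obtain ⟨h1, h2, h3⟩ := hP
  rw [ENNReal.coe_toNNReal hΓne, ENNReal.coe_toNNReal hBne]
  have hhw : pNorm p hw < ∞ := key w d v hwn hdn hvn x u hw h1 h2 h3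
  have hhws : pNorm p hws < ∞ := key ws ds vs hwsn hdsn hvsn xs us hws hs1 hs2 hs3
  obtain ⟨hΨxw, hΨuw⟩ := hΨmap hw hhw
  obtain ⟨hΨxws, hΨuws⟩ := hΨmap hws hhws
  set D : ℝ≥0∞ := pNorm p (w - ws) + pNorm p (d - ds) + pNorm p (v - vs) with hD
  have hAne : pNorm p (hw - hws) ≠ ∞ := by
    refine (lt_of_le_of_lt ((le_of_eq (pNorm_congr fun t => rfl)).trans
      (pNorm_sub_le hp hw hws)) (ENNReal.add_lt_top.2 ⟨hhw, hhws⟩)).ne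
  -- Fd finiteness for both trajectories
  have hxvfin : pNorm p (fun s => Ψx hw s - v s) < ∞ :=
    lt_of_le_of_lt (pNorm_sub_le hp _ _) (ENNReal.add_lt_top.2 ⟨hΨxw, hvn⟩)
  have hudfin : pNorm p (fun s => Ψu hw s + d s) < ∞ :=
    lt_of_le_of_lt (pNorm_add_le hp _ _) (ENNReal.add_lt_top.2 ⟨hΨuw, hdn⟩)
  have hxvsfin : pNorm p (fun s => Ψx hws s - vs s) < ∞ :=
    lt_of_le_of_lt (pNorm_sub_le hp _ _) (ENNReal.add_lt_top.2 ⟨hΨxws, hvsn⟩)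
  have hudsfin : pNorm p (fun s => Ψu hws s + ds s) < ∞ :=
    lt_of_le_of_lt (pNorm_add_le hp _ _) (ENNReal.add_lt_top.2 ⟨hΨuws, hdsn⟩)
  -- the F-mismatch bounds
  have hFd : pNorm p (fun t => F (fun s => Ψx hw s - v s) (fun s => Ψu hw s + d s) t
        - F (Ψx hw) (Ψu hw) t)
      ≤ (γF:ℝ≥0∞) * (pNorm p v + pNorm p d) + βF := by
    have h := hFifg (fun s => Ψx hw s - v s) (fun s => Ψu hw s + d s) (Ψx hw) (Ψu hw)
      hxvfin hudfin hΨxw hΨuw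
    have e1 : pNorm p ((fun s => Ψx hw s - v s) - Ψx hw) = pNorm p v := by
      refine (pNorm_congr (y := fun s => -(v s)) fun s => ?_).trans (pNorm_neg v)
      show Ψx hw s - v s - Ψx hw s = -(v s)
      abel
    have e2 : pNorm p ((fun s => Ψu hw s + d s) - Ψu hw) = pNorm p d := by
      refine pNorm_congr fun s => ?_
      show Ψu hw s + d s - Ψu hw s = d s
      abel
    rw [e1, e2] at h
    exact (le_of_eq (pNorm_congr fun t => rfl)).trans h
  have hFds : pNorm p (fun t => F (fun s => Ψx hws s - vs s) (fun s => Ψu hws s + ds s) t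
        - F (Ψx hws) (Ψu hws) t)
      ≤ (γF:ℝ≥0∞) * (pNorm p vs + pNorm p ds) + βF := by
    have h := hFifg (fun s => Ψx hws s - vs s) (fun s => Ψu hws s + ds s) (Ψx hws) (Ψu hws)
      hxvsfin hudsfin hΨxws hΨuws
    have e1 : pNorm p ((fun s => Ψx hws s - vs s) - Ψx hws) = pNorm p vs := by
      refine (pNorm_congr (y := fun s => -(vs s)) fun s => ?_).trans (pNorm_neg vs)
      show Ψx hws s - vs s - Ψx hws s = -(vs s)
      abel
    have e2 : pNorm p ((fun s => Ψu hws s + ds s) - Ψu hws) = pNorm p ds := by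
      refine pNorm_congr fun s => ?_
      show Ψu hws s + ds s - Ψu hws s = ds s
      abel
    rw [e1, e2] at h
    exact (le_of_eq (pNorm_congr fun t => rfl)).trans h
  -- contraction inequality for hw - hws
  have hΔ := hΔifg hw hws hhw hhws
  have hGw := Geq w d v x u hw h1 h2 h3
  have hGws := Geq ws ds vs xs us hws hs1 hs2 hs3
  set R1 : ℝ≥0∞ := (β:ℝ≥0∞) + (((γF:ℝ≥0∞) * (pNorm p v + pNorm p d) + βF)
      + ((γF:ℝ≥0∞) * (pNorm p vs + pNorm p ds) + βF))
      + (pNorm p (w - ws) + pNorm p (v - vs)) with hR1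
  have hcontr : pNorm p (hw - hws) ≤ (γ:ℝ≥0∞) * pNorm p (hw - hws) + R1 := by
    calc pNorm p (hw - hws)
        = pNorm p (fun t => ((fun t => F (Ψx hw) (Ψu hw) t + hw t - Ψx hw t)
            - (fun t => F (Ψx hws) (Ψu hws) t + hws t - Ψx hws t)) t
          + (((fun t => F (fun s => Ψx hw s - v s) (fun s => Ψu hw s + d s) t
                - F (Ψx hw) (Ψu hw) t) t
              - (fun t => F (fun s => Ψx hws s - vs s) (fun s => Ψu hws s + ds s) t
                - F (Ψx hws) (Ψu hws) t) t)
            + ((w - ws) t + (v - vs) t))) := by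
          refine pNorm_congr fun t => ?_
          simp only [Pi.sub_apply]
          conv_lhs => rw [hGw t, hGws t]
          abel
      _ ≤ pNorm p ((fun t => F (Ψx hw) (Ψu hw) t + hw t - Ψx hw t)
            - (fun t => F (Ψx hws) (Ψu hws) t + hws t - Ψx hws t))
          + ((pNorm p (fun t => F (fun s => Ψx hw s - v s) (fun s => Ψu hw s + d s) t
                - F (Ψx hw) (Ψu hw) t)
              + pNorm p (fun t => F (fun s => Ψx hws s - vs s) (fun s => Ψu hws s + ds s) t
                - F (Ψx hws) (Ψu hws) t))
            + (pNorm p (w - ws) + pNorm p (v - vs))) := by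
          refine (pNorm_add_le hp _ _).trans (add_le_add_right ?_ _)
          refine (pNorm_add_le hp _ _).trans (add_le_add ?_ ?_)
          · exact pNorm_sub_le hp _ _
          · exact pNorm_add_le hp _ _
      _ ≤ ((γ:ℝ≥0∞) * pNorm p (hw - hws) + β)
          + ((((γF:ℝ≥0∞) * (pNorm p v + pNorm p d) + βF)
              + ((γF:ℝ≥0∞) * (pNorm p vs + pNorm p ds) + βF))
            + (pNorm p (w - ws) + pNorm p (v - vs))) :=
          add_le_add hΔ (add_le_add_left (add_le_add hFd hFds) _)
      _ = (γ:ℝ≥0∞) * pNorm p (hw - hws) + R1 := by rw [hR1]; ring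
  have hA : pNorm p (hw - hws) ≤ R1 * K := by
    have := contract_le hγ1 hAne hcontr
    rwa [div_eq_mul_inv] at this
  -- bound R1 by the input difference
  have hvle : pNorm p v ≤ pNorm p (v - vs) + pNorm p vs := by
    refine (le_of_eq (pNorm_congr (y := fun t => (v - vs) t + vs t)
      fun t => by simp)).trans ?_
    exact (pNorm_add_le hp _ _).trans (le_of_eq rfl)
  have hdle : pNorm p d ≤ pNorm p (d - ds) + pNorm p ds := by
    refine (le_of_eq (pNorm_congr (y := fun t => (d - ds) t + ds t)
      fun t => by simp)).trans ?_
    exact (pNorm_add_le hp _ _).trans (le_of_eq rfl)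
  have hvdD : pNorm p (v - vs) + pNorm p (d - ds) ≤ D := by
    rw [hD]
    calc pNorm p (v - vs) + pNorm p (d - ds)
        ≤ pNorm p (w - ws) + (pNorm p (v - vs) + pNorm p (d - ds)) := self_le_add_left _ _
      _ = pNorm p (w - ws) + pNorm p (d - ds) + pNorm p (v - vs) := by ring
  have hwvD : pNorm p (w - ws) + pNorm p (v - vs) ≤ D := by
    rw [hD]
    calc pNorm p (w - ws) + pNorm p (v - vs)
        ≤ pNorm p (d - ds) + (pNorm p (w - ws) + pNorm p (v - vs)) := self_le_add_left _ _
      _ = pNorm p (w - ws) + pNorm p (d - ds) + pNorm p (v - vs) := by ring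
  have hR1le : R1 ≤ ((γF:ℝ≥0∞) + 1) * D + C0 := by
    rw [hR1, hC0]
    calc (β:ℝ≥0∞) + (((γF:ℝ≥0∞) * (pNorm p v + pNorm p d) + βF)
          + ((γF:ℝ≥0∞) * (pNorm p vs + pNorm p ds) + βF))
        + (pNorm p (w - ws) + pNorm p (v - vs))
        ≤ (β:ℝ≥0∞) + (((γF:ℝ≥0∞) * ((pNorm p (v - vs) + pNorm p vs)
              + (pNorm p (d - ds) + pNorm p ds)) + βF)
          + ((γF:ℝ≥0∞) * (pNorm p vs + pNorm p ds) + βF)) + D := by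
          gcongr
      _ ≤ (β:ℝ≥0∞) + (((γF:ℝ≥0∞) * (D + (pNorm p vs + pNorm p ds)) + βF)
          + ((γF:ℝ≥0∞) * (pNorm p vs + pNorm p ds) + βF)) + D := by
          have hX : (pNorm p (v - vs) + pNorm p vs) + (pNorm p (d - ds) + pNorm p ds)
              ≤ D + (pNorm p vs + pNorm p ds) :=
            le_of_eq (by ring) |>.trans (add_le_add_left hvdD _)
          exact add_le_add_left (add_le_add_right (add_le_add_left
            (add_le_add_left (mul_le_mul_right hX _) _) _) _) _
      _ = ((γF:ℝ≥0∞) + 1) * D + ((β:ℝ≥0∞) + 2*(βF:ℝ≥0∞)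
          + 2*(γF:ℝ≥0∞)*(pNorm p vs + pNorm p ds)) := by ring
  have hAfinal : pNorm p (hw - hws) ≤ (((γF:ℝ≥0∞) + 1) * D + C0) * K :=
    hA.trans (mul_le_mul_left hR1le K)
  -- output differences
  have hΨd := hΨifg hw hws hhw hhws
  have hxd : pNorm p (x - xs) ≤ pNorm p (Ψx hw - Ψx hws) + pNorm p (v - vs) := by
    refine (le_of_eq (pNorm_congr (y := fun t => (Ψx hw - Ψx hws) t - (v - vs) t)
      fun t => ?_)).trans (pNorm_sub_le hp _ _)
    simp only [Pi.sub_apply]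
    rw [hxOf v x hw h2 t, hxOf vs xs hws hs2 t]
    abel
  have hud : pNorm p (u - us) ≤ pNorm p (Ψu hw - Ψu hws) + pNorm p (d - ds) := by
    refine (le_of_eq (pNorm_congr (y := fun t => (Ψu hw - Ψu hws) t + (d - ds) t)
      fun t => ?_)).trans (pNorm_add_le hp _ _)
    simp only [Pi.sub_apply]
    rw [h3 t, hs3 t]
    abel
  -- final assembly
  calc pNorm p (x - xs) + pNorm p (u - us) + pNorm p (hw - hws)
      ≤ (pNorm p (Ψx hw - Ψx hws) + pNorm p (v - vs))
        + (pNorm p (Ψu hw - Ψu hws) + pNorm p (d - ds)) + pNorm p (hw - hws) :=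
        add_le_add (add_le_add hxd hud) le_rfl
    _ = (pNorm p (Ψx hw - Ψx hws) + pNorm p (Ψu hw - Ψu hws))
        + (pNorm p (v - vs) + pNorm p (d - ds)) + pNorm p (hw - hws) := by ring
    _ ≤ ((γΨ:ℝ≥0∞) * pNorm p (hw - hws) + βΨ) + D + pNorm p (hw - hws) :=
        add_le_add (add_le_add hΨd hvdD) le_rfl
    _ = ((γΨ:ℝ≥0∞) + 1) * pNorm p (hw - hws) + (βΨ + D) := by ring
    _ ≤ ((γΨ:ℝ≥0∞) + 1) * ((((γF:ℝ≥0∞) + 1) * D + C0) * K) + (βΨ + D) := by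
        gcongr
    _ = Γ * D + B := by rw [hΓdef, hBdef]; ring
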